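/- With the Atkin polynomials A_{n,2}(X) as defined by their three-term recursion, A_{n,2}(1728) = -12^{3n+1} (-1/12)_n (7/12)_n / (2n-1)! for all n ≥ 1. -/

import Mathlib

open Polynomial

/-- Recursion coefficient `a_{n,2} = 24(144n²-29)/((2n+1)(2n-1))`. -/
noncomputable def a2 (n : ℕ) : ℚ :=
  24 * (144 * (n : ℚ) ^ 2 - 29) / ((2 * (n : ℚ) + 1) * (2 * (n : ℚ) - 1))

/-- Recursion coefficient `b_{n,2} = 36(12n-13)(12n-7)(12n-5)(12n+1)/(n(n-1)(2n-1)²)`. -/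
noncomputable def b2 (n : ℕ) : ℚ :=
  36 * (12 * (n : ℚ) - 13) * (12 * (n : ℚ) - 7) * (12 * (n : ℚ) - 5) * (12 * (n : ℚ) + 1) /
    ((n : ℚ) * ((n : ℚ) - 1) * (2 * (n : ℚ) - 1) ^ 2)

/-- The monic Atkin polynomials `A_{n,2}(X)`, defined by the three-term recursion
`A_{n+1,2} = (X - a_n)A_{n,2} - b_n A_{n-1,2}` for `n ≥ 2`. -/
noncomputable def A2 : ℕ → Polynomial ℚ
  | 0 => 1
  | 1 => X - C 720
  | 2 => X ^ 2 - C 1640 * X + C 269280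
  | n + 3 => (X - C (a2 (n + 2))) * A2 (n + 2) - C (b2 (n + 2)) * A2 (n + 1)

/-- The claimed value `-12^{3n+1} (-1/12)ₙ (7/12)ₙ / (2n-1)!`. -/
noncomputable def rhs2 (n : ℕ) : ℚ :=
  -(12 : ℚ) ^ (3 * n + 1) * (ascPochhammer ℚ n).eval (-1 / 12 : ℚ) *
    (ascPochhammer ℚ n).eval (7 / 12 : ℚ) / ((2 * n - 1).factorial : ℚ)

lemma rhs2_step (k : ℕ) :
    rhs2 (k + 3) = (1728 - a2 (k + 2)) * rhs2 (k + 2) - b2 (k + 2) * rhs2 (k + 1) := by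
  set P := (ascPochhammer ℚ (k + 1)).eval (-1 / 12 : ℚ) with hPdef
  set Q := (ascPochhammer ℚ (k + 1)).eval (7 / 12 : ℚ) with hQdef
  set F := ((2 * k + 1).factorial : ℚ) with hFdef
  have hP2 : (ascPochhammer ℚ (k + 2)).eval (-1 / 12 : ℚ) = P * (-1/12 + (k + 1)) := by
    rw [show k + 2 = (k + 1) + 1 from rfl, ascPochhammer_succ_eval]; push_cast; ring
  have hQ2 : (ascPochhammer ℚ (k + 2)).eval (7 / 12 : ℚ) = Q * (7/12 + (k + 1)) := by
    rw [show k + 2 = (k + 1) + 1 from rfl, ascPochhammer_succ_eval]; push_cast; ring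
  have hP3 : (ascPochhammer ℚ (k + 3)).eval (-1 / 12 : ℚ)
      = P * (-1/12 + (k + 1)) * (-1/12 + (k + 2)) := by
    rw [show k + 3 = (k + 2) + 1 from rfl, ascPochhammer_succ_eval, hP2]; push_cast; ring
  have hQ3 : (ascPochhammer ℚ (k + 3)).eval (7 / 12 : ℚ)
      = Q * (7/12 + (k + 1)) * (7/12 + (k + 2)) := by
    rw [show k + 3 = (k + 2) + 1 from rfl, ascPochhammer_succ_eval, hQ2]; push_cast; ring
  have hf1 : 2 * (k + 1) - 1 = 2 * k + 1 := by omega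
  have hf2 : ((2 * (k + 2) - 1).factorial : ℚ) = (2 * k + 3) * (2 * k + 2) * F := by
    rw [show 2 * (k + 2) - 1 = (2 * k + 2) + 1 from by omega, Nat.factorial_succ,
      Nat.factorial_succ]; push_cast [hFdef]; ring
  have hf3 : ((2 * (k + 3) - 1).factorial : ℚ)
      = (2 * k + 5) * (2 * k + 4) * (2 * k + 3) * (2 * k + 2) * F := by
    rw [show 2 * (k + 3) - 1 = (2 * k + 4) + 1 from by omega, Nat.factorial_succ,
      show 2 * k + 4 = (2 * k + 3) + 1 from rfl, Nat.factorial_succ,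
      show 2 * k + 3 = (2 * k + 2) + 1 from rfl, Nat.factorial_succ, Nat.factorial_succ]
    push_cast [hFdef]; ring
  have hpow2 : (12 : ℚ) ^ (3 * (k + 2) + 1) = 12 ^ (3 * (k + 1) + 1) * 12 ^ 3 := by
    rw [← pow_add]; ring_nf
  have hpow3 : (12 : ℚ) ^ (3 * (k + 3) + 1) = 12 ^ (3 * (k + 1) + 1) * 12 ^ 6 := by
    rw [← pow_add]; ring_nf
  have hF : F ≠ 0 := by rw [hFdef]; exact_mod_cast (Nat.factorial_pos _).ne'
  simp only [rhs2, a2, b2, hP3, hQ3, hP2, hQ2, hf1, hf2, hf3, hpow2, hpow3]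
  push_cast
  have h1 : (2:ℚ) * k + 2 ≠ 0 := by positivity
  have h2 : (2:ℚ) * k + 3 ≠ 0 := by positivity
  have h3 : (2:ℚ) * k + 4 ≠ 0 := by positivity
  have h4 : (2:ℚ) * k + 5 ≠ 0 := by positivity
  have hd1 : (2 * ((k:ℚ) + 2) + 1) * (2 * ((k:ℚ) + 2) - 1) ≠ 0 := by
    have : (2 * ((k:ℚ) + 2) + 1) * (2 * ((k:ℚ) + 2) - 1) = (2 * k + 5) * (2 * k + 3) := by ring
    rw [this]; positivity
  have hd2 : ((k:ℚ) + 2) * ((k:ℚ) + 2 - 1) * (2 * ((k:ℚ) + 2) - 1) ^ 2 ≠ 0 := by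
    have : ((k:ℚ) + 2) * ((k:ℚ) + 2 - 1) * (2 * ((k:ℚ) + 2) - 1) ^ 2
        = (k + 2) * (k + 1) * (2 * k + 3) ^ 2 := by ring
    rw [this]; positivity
  rw [← hFdef, ← hPdef, ← hQdef]
  have h5 : 2 * ((k:ℚ) + 2) - 1 ≠ 0 := by
    have : (0:ℚ) ≤ k := k.cast_nonneg; intro h; linarith
  have h6 : (k:ℚ) + 2 - 1 ≠ 0 := by
    have : (0:ℚ) ≤ k := k.cast_nonneg; intro h; linarith
  field_simp
  ring

lemma rhs2_one : rhs2 1 = 1008 := by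
  simp [rhs2, ascPochhammer_one]
  norm_num

lemma rhs2_two : rhs2 2 = 421344 := by
  have : (ascPochhammer ℚ 2) = (ascPochhammer ℚ 1) * (X + 1) := by
    simpa using ascPochhammer_succ_right ℚ 1
  simp [rhs2, this, ascPochhammer_one, Nat.factorial]
  norm_num

lemma A2_rhs2 (k : ℕ) :
    (A2 (k + 1)).eval 1728 = rhs2 (k + 1) ∧ (A2 (k + 2)).eval 1728 = rhs2 (k + 2) := by
  induction k with
  | zero =>
    constructor
    · show ((X : ℚ[X]) - C 720).eval 1728 = rhs2 1
      rw [rhs2_one]; simp; norm_num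
    · show ((X : ℚ[X]) ^ 2 - C 1640 * X + C 269280).eval 1728 = rhs2 2
      rw [rhs2_two]; simp; norm_num
  | succ k ih =>
    refine ⟨ih.2, ?_⟩
    show ((X - C (a2 (k + 2))) * A2 (k + 2) - C (b2 (k + 2)) * A2 (k + 1)).eval 1728 = _
    rw [rhs2_step k]
    simp only [eval_sub, eval_mul, eval_X, eval_C, ih.1, ih.2]

/-- `A_{n,2}(1728) = -12^{3n+1} (-1/12)ₙ (7/12)ₙ / (2n-1)!` for all `n ≥ 1`. -/
theorem A2_eval_1728 (n : ℕ) (hn : 1 ≤ n) :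
    (A2 n).eval 1728 =
      -(12 : ℚ) ^ (3 * n + 1) * (ascPochhammer ℚ n).eval (-1 / 12 : ℚ) *
        (ascPochhammer ℚ n).eval (7 / 12 : ℚ) / ((2 * n - 1).factorial : ℚ) := by
  obtain ⟨k, rfl⟩ := Nat.exists_eq_add_of_le hn
  rw [add_comm]
  exact (A2_rhs2 k).1
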